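/- Let S be a finite set, F = F(S) the free group on S, and s : S → ℝ_{>0} a significance function. Let (π_n) and (π'_n) be sequences of finitely described invariant random subgroups of F such that π_n converges to some π_∞ ∈ IRS(F) in the weak* topology and d^s_edit(π_n, π'_n) → 0 as n → ∞. Then π'_n also converges to π_∞ in the weak* topology. -/

import Mathlib

open MeasureTheory
open scoped ENNReal

/-- The finitely described invariant random subgroup `Φ(σ)` induced by a finite action
`σ : S → Sym(X)`: sample a uniform `x ∈ X` and output (the indicator of) `Stab(σ,x)`,
as a Borel probability measure on `{0,1}^{F(S)} = FreeGroup S → Bool`. -/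
noncomputable def PhiIRS {S X : Type} [Fintype X] [DecidableEq X]
    (σ : S → Equiv.Perm X) : Measure (FreeGroup S → Bool) :=
  (Fintype.card X : ℝ≥0∞)⁻¹ •
    ∑ x : X, Measure.dirac (fun w : FreeGroup S => decide (FreeGroup.lift σ w x = x))

/-- The `sig`-weighted edit distance between actions `ρ : S → Sym(Fin n)` and
`φ : S → Sym(Fin m)` with `n ≤ m` (identifying `Fin n ⊆ Fin m`):
`min_{θ ∈ Sym(Fin m)} Σ_s sig(s)·d_H(ρ(s), θ φ(s) θ⁻¹)` with the generalized
normalized Hamming distance. -/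
noncomputable def editDistFin {S : Type} [Fintype S] (sig : S → ℝ) {n m : ℕ} (h : n ≤ m)
    (ρ : S → Equiv.Perm (Fin n)) (φ : S → Equiv.Perm (Fin m)) : ℝ :=
  ⨅ θ : Equiv.Perm (Fin m),
    ∑ s : S, sig s *
      (1 - (Nat.card {x : Fin n //
          Fin.castLE h (ρ s x) = (θ * φ s * θ⁻¹) (Fin.castLE h x)} : ℝ) / m)

/-- The `sig`-weighted edit distance between finitely described IRSs: the infimum of the
edit distances over all pairs of finite actions representing them (arranged so that one
underlying set contains the other). -/
noncomputable def editDistIRS {S : Type} [Fintype S] (sig : S → ℝ)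
    (π π' : Measure (FreeGroup S → Bool)) : ℝ :=
  sInf {d : ℝ |
    ∃ (n m : ℕ) (h : n ≤ m) (ρ : S → Equiv.Perm (Fin n)) (φ : S → Equiv.Perm (Fin m)),
      ((PhiIRS ρ = π ∧ PhiIRS φ = π') ∨ (PhiIRS ρ = π' ∧ PhiIRS φ = π)) ∧
      d = editDistFin sig h ρ φ}

section Aux
variable {S : Type} [Fintype S]

instance FreeGroup.instCountableOfFintype : Countable (FreeGroup S) := by
  classical
  exact FreeGroup.toWord_injective.countable

/-- indicator of the stabilizer -/
def stabFun {X : Type} [DecidableEq X] (σ : S → Equiv.Perm X) (x : X) : FreeGroup S → Bool :=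
  fun w => decide (FreeGroup.lift σ w x = x)

noncomputable def wlen {S : Type} (w : FreeGroup S) : ℕ :=
  (@FreeGroup.toWord S (Classical.decEq S) w).length

lemma integral_PhiIRS {X : Type} [Fintype X] [DecidableEq X] (σ : S → Equiv.Perm X)
    (f : C(FreeGroup S → Bool, ℝ)) :
    ∫ A, f A ∂(PhiIRS σ) = (∑ x : X, f (stabFun σ x)) / (Fintype.card X) := by
  have hint : ∀ a : FreeGroup S → Bool, Integrable (⇑f) (Measure.dirac a) := fun a => by
    exact (BoundedContinuousFunction.mkOfCompact f).integrable (Measure.dirac a)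
  rw [PhiIRS, integral_smul_measure, integral_finset_sum_measure (fun i _ => hint _)]
  simp only [integral_dirac' _ _ f.continuous.stronglyMeasurable]
  simp only [ENNReal.toReal_inv, smul_eq_mul, inv_mul_eq_div]
  rfl

omit [Fintype S] in
lemma isProbabilityMeasure_PhiIRS {X : Type} [Fintype X] [DecidableEq X] [Nonempty X]
    (σ : S → Equiv.Perm X) : IsProbabilityMeasure (PhiIRS σ) := by
  constructor
  rw [PhiIRS]
  simp [Measure.smul_apply, Measure.finset_sum_apply]
  rw [ENNReal.inv_mul_cancel] <;> simp [Fintype.card_ne_zero]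

omit [Fintype S] in
lemma lift_conj {X : Type} (σ : S → Equiv.Perm X) (θ : Equiv.Perm X) (w : FreeGroup S) :
    FreeGroup.lift (fun s => θ * σ s * θ⁻¹) w = θ * FreeGroup.lift σ w * θ⁻¹ := by
  have : FreeGroup.lift (fun s => θ * σ s * θ⁻¹)
      = ((MulAut.conj θ).toMonoidHom).comp (FreeGroup.lift σ) := by
    apply FreeGroup.ext_hom
    intro a
    simp [MulAut.conj]
  rw [this]
  simp [MulAut.conj]

omit [Fintype S] in
lemma PhiIRS_conj {X : Type} [Fintype X] [DecidableEq X] (σ : S → Equiv.Perm X)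
    (θ : Equiv.Perm X) : PhiIRS (fun s => θ * σ s * θ⁻¹) = PhiIRS σ := by
  unfold PhiIRS
  congr 1
  have hterm : ∀ x : X,
      (fun w : FreeGroup S => decide (FreeGroup.lift (fun s => θ * σ s * θ⁻¹) w x = x))
        = (fun w : FreeGroup S => decide (FreeGroup.lift σ w (θ⁻¹ x) = θ⁻¹ x)) := by
    intro x
    funext w
    rw [lift_conj]
    apply decide_eq_decide.mpr
    constructor
    · intro hx
      have := congrArg (fun z => θ⁻¹ z) hx
      simpa using this
    · intro hx
      simp only [Equiv.Perm.mul_apply]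
      rw [hx]
      simp
  calc (∑ x : X, Measure.dirac fun w : FreeGroup S =>
          decide (FreeGroup.lift (fun s => θ * σ s * θ⁻¹) w x = x))
      = ∑ x : X, Measure.dirac fun w : FreeGroup S =>
          decide (FreeGroup.lift σ w (θ⁻¹ x) = θ⁻¹ x) := by
        exact Finset.sum_congr rfl (fun x _ => by rw [hterm x])
    _ = ∑ x : X, Measure.dirac fun w : FreeGroup S =>
          decide (FreeGroup.lift σ w x = x) := by
        exact Equiv.sum_comp θ⁻¹ (fun y => Measure.dirac fun w : FreeGroup S =>
          decide (FreeGroup.lift σ w y = y))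

lemma exists_window (f : C(FreeGroup S → Bool, ℝ)) {ε : ℝ} (hε : 0 < ε) :
    ∃ W : Finset (FreeGroup S), ∀ A B : FreeGroup S → Bool,
      (∀ w ∈ W, A w = B w) → |f A - f B| ≤ ε := by
  classical
  have key : ∀ A : FreeGroup S → Bool, ∃ I : Finset (FreeGroup S),
      ∀ B, (∀ i ∈ I, B i = A i) → |f B - f A| < ε / 2 := by
    intro A
    have hopen : IsOpen (f ⁻¹' Metric.ball (f A) (ε/2)) :=
      (Metric.isOpen_ball).preimage f.continuous
    have hmem : A ∈ f ⁻¹' Metric.ball (f A) (ε/2) := by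
      simp [Metric.mem_ball, half_pos hε]
    obtain ⟨I, u, hu, hsub⟩ := (isOpen_pi_iff.mp hopen) A hmem
    refine ⟨I, fun B hB => ?_⟩
    have hBpi : B ∈ (I : Set (FreeGroup S)).pi u := by
      intro i hi
      rw [hB i hi]
      exact (hu i hi).2
    have := hsub hBpi
    simpa [Metric.mem_ball, Real.dist_eq] using this
  choose I hI using key
  set C : (FreeGroup S → Bool) → Set (FreeGroup S → Bool) :=
    fun A => {B | ∀ i ∈ I A, B i = A i} with hC
  have hCopen : ∀ A, IsOpen (C A) := by
    intro A
    have : C A = Set.pi (I A : Set (FreeGroup S)) (fun i => {A i}) := by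
      ext B; simp [hC, Set.mem_pi]
    rw [this]
    exact isOpen_set_pi (I A).finite_toSet (fun i _ => isOpen_discrete _)
  have hcover : (Set.univ : Set (FreeGroup S → Bool)) ⊆ ⋃ A, C A :=
    fun A _ => Set.mem_iUnion.mpr ⟨A, fun i _ => rfl⟩
  obtain ⟨t, ht⟩ := isCompact_univ.elim_finite_subcover C hCopen hcover
  refine ⟨t.biUnion (fun A => I A), fun A B hAB => ?_⟩
  obtain ⟨A₀, hA₀t, hA₀⟩ : ∃ A₀ ∈ t, A ∈ C A₀ := by
    have := ht (Set.mem_univ A)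
    simpa using this
  have h1 : |f A - f A₀| < ε / 2 := hI A₀ A hA₀
  have h2 : |f B - f A₀| < ε / 2 := by
    refine hI A₀ B (fun i hi => ?_)
    rw [← hAB i (Finset.mem_biUnion.mpr ⟨A₀, hA₀t, hi⟩)]
    exact hA₀ i hi
  have h3 : |f A - f B| ≤ |f A - f A₀| + |f A₀ - f B| := abs_sub_le _ _ _
  have h4 : |f A₀ - f B| = |f B - f A₀| := abs_sub_comm _ _
  linarith

/-- number of points where two permutations disagree -/
def Dcard {X : Type} [Fintype X] [DecidableEq X] (σ τ : Equiv.Perm X) : ℕ :=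
  (Finset.univ.filter (fun x => σ x ≠ τ x)).card

omit [Fintype S] in
lemma Dcard_inv {X : Type} [Fintype X] [DecidableEq X] (σ τ : Equiv.Perm X) :
    Dcard σ⁻¹ τ⁻¹ = Dcard σ τ := by
  unfold Dcard
  apply Finset.card_bij' (fun x _ => τ⁻¹ x) (fun y _ => τ y)
  · intro x hx
    simp only [Finset.mem_filter, Finset.mem_univ, true_and] at hx ⊢
    intro hcon
    apply hx
    have := congrArg (fun z => σ⁻¹ z) hcon
    simp only [Equiv.Perm.inv_def, Equiv.symm_apply_apply, Equiv.apply_symm_apply] at this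
    exact this.symm
  · intro y hy
    simp only [Finset.mem_filter, Finset.mem_univ, true_and] at hy ⊢
    intro hcon
    apply hy
    have := congrArg (fun z => σ z) hcon
    simp only [Equiv.Perm.inv_def, Equiv.apply_symm_apply] at this
    rw [this]
    simp
  · intro x _; simp
  · intro y _; simp

omit [Fintype S] in
lemma Dcard_mul {X : Type} [Fintype X] [DecidableEq X] (σ₁ σ₂ τ₁ τ₂ : Equiv.Perm X) :
    Dcard (σ₁ * σ₂) (τ₁ * τ₂) ≤ Dcard σ₁ τ₁ + Dcard σ₂ τ₂ := by
  unfold Dcard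
  have hsub : (Finset.univ.filter (fun x => (σ₁ * σ₂) x ≠ (τ₁ * τ₂) x)) ⊆
      (Finset.univ.filter (fun x => σ₁ (τ₂ x) ≠ τ₁ (τ₂ x))) ∪
      (Finset.univ.filter (fun x => σ₂ x ≠ τ₂ x)) := by
    intro x hx
    simp only [Finset.mem_filter, Finset.mem_univ, true_and, Finset.mem_union] at hx ⊢
    by_contra hcon
    push_neg at hcon
    apply hx
    simp only [Equiv.Perm.mul_apply, hcon.2, hcon.1]
  calc (Finset.univ.filter (fun x => (σ₁ * σ₂) x ≠ (τ₁ * τ₂) x)).card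
      ≤ ((Finset.univ.filter (fun x => σ₁ (τ₂ x) ≠ τ₁ (τ₂ x))) ∪
        (Finset.univ.filter (fun x => σ₂ x ≠ τ₂ x))).card := Finset.card_le_card hsub
    _ ≤ (Finset.univ.filter (fun x => σ₁ (τ₂ x) ≠ τ₁ (τ₂ x))).card
        + (Finset.univ.filter (fun x => σ₂ x ≠ τ₂ x)).card := Finset.card_union_le _ _
    _ ≤ (Finset.univ.filter (fun y => σ₁ y ≠ τ₁ y)).card
        + (Finset.univ.filter (fun x => σ₂ x ≠ τ₂ x)).card := by
        gcongr ?_ + _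
        apply le_of_eq
        apply Finset.card_bij' (fun x _ => τ₂ x) (fun y _ => τ₂⁻¹ y)
        · intro x hx; simp only [Finset.mem_filter, Finset.mem_univ, true_and] at hx ⊢; exact hx
        · intro y hy; simp only [Finset.mem_filter, Finset.mem_univ, true_and] at hy ⊢
          simpa using hy
        · intro x _; simp
        · intro y _; simp

omit [Fintype S] in
lemma Dcard_one {X : Type} [Fintype X] [DecidableEq X] :
    Dcard (1 : Equiv.Perm X) 1 = 0 := by
  simp [Dcard]

omit [Fintype S] in
lemma Dcard_prod_le {X : Type} [Fintype X] [DecidableEq X] (σ τ : S → Equiv.Perm X) (b : ℕ)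
    (hb : ∀ s, Dcard (σ s) (τ s) ≤ b) (L : List (S × Bool)) :
    Dcard (FreeGroup.lift σ (FreeGroup.mk L)) (FreeGroup.lift τ (FreeGroup.mk L))
      ≤ L.length * b := by
  induction L with
  | nil =>
      simp only [List.length_nil, Nat.zero_mul]
      have h1 : FreeGroup.mk ([] : List (S × Bool)) = 1 := rfl
      rw [h1]
      simp [Dcard_one]
  | cons p L ih =>
      have hsplit : FreeGroup.mk (p :: L) = FreeGroup.mk [p] * FreeGroup.mk L := by
        rw [FreeGroup.mul_mk]; rfl
      rw [hsplit, map_mul, map_mul]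
      have hhead : Dcard (FreeGroup.lift σ (FreeGroup.mk [p]))
          (FreeGroup.lift τ (FreeGroup.mk [p])) ≤ b := by
        rcases p with ⟨s, bo⟩
        cases bo
        · have h1 : FreeGroup.mk [(s, false)] = (FreeGroup.of s)⁻¹ := by
            rw [show FreeGroup.of s = FreeGroup.mk [(s, true)] from rfl, FreeGroup.inv_mk]
            simp [FreeGroup.invRev]
          rw [h1, map_inv, map_inv]
          simp only [FreeGroup.lift_apply_of]
          rw [Dcard_inv]
          exact hb s
        · have h1 : FreeGroup.mk [(s, true)] = FreeGroup.of s := rfl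
          rw [h1]
          simp only [FreeGroup.lift_apply_of]
          exact hb s
      calc Dcard (FreeGroup.lift σ (FreeGroup.mk [p]) * FreeGroup.lift σ (FreeGroup.mk L))
            (FreeGroup.lift τ (FreeGroup.mk [p]) * FreeGroup.lift τ (FreeGroup.mk L))
          ≤ Dcard (FreeGroup.lift σ (FreeGroup.mk [p])) (FreeGroup.lift τ (FreeGroup.mk [p]))
            + Dcard (FreeGroup.lift σ (FreeGroup.mk L)) (FreeGroup.lift τ (FreeGroup.mk L)) :=
            Dcard_mul _ _ _ _
        _ ≤ b + L.length * b := by gcongr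
        _ = (L.length + 1) * b := by ring
        _ = (p :: L).length * b := by simp

omit [Fintype S] in
lemma Dcard_lift_le {X : Type} [Fintype X] [DecidableEq X] (σ τ : S → Equiv.Perm X) (b : ℕ)
    (hb : ∀ s, Dcard (σ s) (τ s) ≤ b) (w : FreeGroup S) :
    Dcard (FreeGroup.lift σ w) (FreeGroup.lift τ w) ≤ wlen w * b := by
  letI := Classical.decEq S
  have h1 : FreeGroup.mk (FreeGroup.toWord w) = w := FreeGroup.mk_toWord
  have := Dcard_prod_le σ τ b hb (FreeGroup.toWord w)
  rw [h1] at this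
  exact this

omit [Fintype S] in
lemma lift_viaEmbedding {n m : ℕ} (h : n ≤ m) (ρ : S → Equiv.Perm (Fin n)) (w : FreeGroup S) :
    FreeGroup.lift (fun s => (ρ s).viaEmbedding (Fin.castLEEmb h)) w
      = (FreeGroup.lift ρ w).viaEmbedding (Fin.castLEEmb h) := by
  have : FreeGroup.lift (fun s => (ρ s).viaEmbedding (Fin.castLEEmb h))
      = (Equiv.Perm.viaEmbeddingHom (Fin.castLEEmb h)).comp (FreeGroup.lift ρ) := by
    apply FreeGroup.ext_hom
    intro a
    simp [Equiv.Perm.viaEmbeddingHom_apply]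
  rw [this]
  simp [Equiv.Perm.viaEmbeddingHom_apply]

set_option maxHeartbeats 2000000 in
lemma core_estimate [Nonempty S] (sig : S → ℝ) (hsig : ∀ s, 0 < sig s)
    (smin : ℝ) (hsmin : 0 < smin) (hsmin' : ∀ s, smin ≤ sig s)
    {n m : ℕ} (h : n ≤ m) (hn : 0 < n)
    (ρ : S → Equiv.Perm (Fin n)) (φ : S → Equiv.Perm (Fin m))
    (f : C(FreeGroup S → Bool, ℝ)) (C : ℝ) (hC : ∀ A, |f A| ≤ C)
    (ε : ℝ) (hε : 0 ≤ ε) (W : Finset (FreeGroup S))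
    (hW : ∀ A B : FreeGroup S → Bool, (∀ w ∈ W, A w = B w) → |f A - f B| ≤ ε)
    (Lt : ℕ) (hLt : ∀ w ∈ W, wlen w ≤ Lt)
    (D : ℝ) (hD0 : 0 ≤ D)
    (hD : ∀ s, sig s * (1 - (Nat.card {x : Fin n //
        Fin.castLE h (ρ s x) = (φ s) (Fin.castLE h x)} : ℝ) / m) ≤ D) :
    |(∑ x : Fin n, f (stabFun ρ x)) / n - (∑ x : Fin m, f (stabFun φ x)) / m|
      ≤ ε + 2 * C * (1 + W.card * Lt) * D / smin := by
  classical
  have hm : 0 < m := lt_of_lt_of_le hn h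
  have hmR : (0:ℝ) < m := by exact_mod_cast hm
  have hnR : (0:ℝ) < n := by exact_mod_cast hn
  have hC0 : 0 ≤ C := le_trans (abs_nonneg _) (hC (fun _ => true))
  set c : S → ℕ := fun s => Nat.card {x : Fin n //
      Fin.castLE h (ρ s x) = (φ s) (Fin.castLE h x)} with hc
  have hc_filter : ∀ s, c s = ((Finset.univ : Finset (Fin n)).filter
      (fun x => Fin.castLE h (ρ s x) = (φ s) (Fin.castLE h x))).card := by
    intro s
    rw [hc]
    simp only [Nat.card_eq_fintype_card, Fintype.card_subtype]
  have hc_le_n : ∀ s, c s ≤ n := by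
    intro s
    rw [hc_filter s]
    exact le_trans (Finset.card_filter_le _ _) (by simp)
  -- the extended permutations
  set ρh : S → Equiv.Perm (Fin m) :=
    fun s => (ρ s).viaEmbedding (Fin.castLEEmb h) with hρh
  have hinj : Function.Injective (Fin.castLE h) := Fin.castLE_injective h
  -- pointwise disagreement bound
  have hDc : ∀ s, Dcard (ρh s) (φ s) + c s ≤ m := by
    intro s
    set E : Finset (Fin m) := ((Finset.univ : Finset (Fin n)).filter
      (fun x => Fin.castLE h (ρ s x) = (φ s) (Fin.castLE h x))).image (Fin.castLE h) with hE
    have hcardE : E.card = c s := by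
      rw [hE, Finset.card_image_of_injective _ hinj, hc_filter s]
    have hdisj : Disjoint ((Finset.univ : Finset (Fin m)).filter
        (fun z => ρh s z ≠ φ s z)) E := by
      rw [Finset.disjoint_right]
      intro z hzE hzF
      simp only [hE, Finset.mem_image, Finset.mem_filter, Finset.mem_univ, true_and] at hzE hzF
      obtain ⟨x, hx, rfl⟩ := hzE
      apply hzF
      have : ρh s (Fin.castLE h x) = Fin.castLE h (ρ s x) := by
        rw [hρh]
        exact Equiv.Perm.viaEmbedding_apply _ _ x
      rw [this, hx]
    calc Dcard (ρh s) (φ s) + c s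
        = (((Finset.univ : Finset (Fin m)).filter (fun z => ρh s z ≠ φ s z)) ∪ E).card := by
          rw [Finset.card_union_of_disjoint hdisj, hcardE]; rfl
      _ ≤ (Finset.univ : Finset (Fin m)).card := Finset.card_le_card (Finset.subset_univ _)
      _ = m := by simp
  have hkey : ∀ s, ((m : ℝ) - c s) ≤ m * D / smin := by
    intro s
    have h1 : 1 - (c s : ℝ) / m ≤ D / sig s := by
      rw [le_div_iff₀ (hsig s)]
      calc (1 - (c s : ℝ) / m) * sig s = sig s * (1 - (c s : ℝ)/m) := by ring
        _ ≤ D := hD s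
    have h2 : D / sig s ≤ D / smin := div_le_div_of_nonneg_left hD0 hsmin (hsmin' s)
    have h3 : 1 - (c s : ℝ) / m ≤ D / smin := le_trans h1 h2
    have h4 : (m : ℝ) * (1 - (c s : ℝ)/m) ≤ m * (D / smin) :=
      mul_le_mul_of_nonneg_left h3 (le_of_lt hmR)
    calc ((m:ℝ) - c s) = m * (1 - (c s : ℝ)/m) := by field_simp
      _ ≤ m * (D / smin) := h4
      _ = m * D / smin := by ring
  -- uniform bound b on generator disagreements
  set b : ℕ := Finset.univ.sup (fun s => Dcard (ρh s) (φ s)) with hb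
  have hbb : ∀ s, Dcard (ρh s) (φ s) ≤ b := by
    intro s; rw [hb]
    exact Finset.le_sup (f := fun s => Dcard (ρh s) (φ s)) (Finset.mem_univ s)
  have hbβ : (b : ℝ) ≤ m * D / smin := by
    obtain ⟨s₀, _, hs₀⟩ := Finset.exists_mem_eq_sup (Finset.univ : Finset S)
      Finset.univ_nonempty (fun s => Dcard (ρh s) (φ s))
    rw [← hb] at hs₀
    have h1 : (b : ℝ) ≤ (m : ℝ) - c s₀ := by
      have := hDc s₀
      rw [hs₀]
      have : Dcard (ρh s₀) (φ s₀) ≤ m - c s₀ := by omega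
      calc (Dcard (ρh s₀) (φ s₀) : ℝ) ≤ ((m - c s₀ : ℕ) : ℝ) := by exact_mod_cast this
        _ ≤ (m : ℝ) - c s₀ := by
          rw [Nat.cast_sub (by omega)]
    exact le_trans h1 (hkey s₀)
  have hmn : ((m : ℝ) - n) ≤ m * D / smin := by
    obtain ⟨s₀⟩ := (inferInstance : Nonempty S)
    have := hkey s₀
    have h2 := hc_le_n s₀
    have : ((m:ℝ) - n) ≤ (m:ℝ) - c s₀ := by
      have : (c s₀ : ℝ) ≤ n := by exact_mod_cast h2
      linarith
    linarith [hkey s₀]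
  -- bad set
  set Bad : Finset (Fin m) := W.biUnion (fun w => (Finset.univ : Finset (Fin m)).filter
    (fun z => FreeGroup.lift ρh w z ≠ FreeGroup.lift φ w z)) with hBadDef
  have hBadCard : (Bad.card : ℝ) ≤ (W.card : ℝ) * Lt * (m * D / smin) := by
    have h1 : Bad.card ≤ W.card * (Lt * b) := by
      calc Bad.card ≤ ∑ w ∈ W, ((Finset.univ : Finset (Fin m)).filter
            (fun z => FreeGroup.lift ρh w z ≠ FreeGroup.lift φ w z)).card :=
            Finset.card_biUnion_le
        _ ≤ ∑ w ∈ W, Lt * b := by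
            apply Finset.sum_le_sum
            intro w hw
            calc ((Finset.univ : Finset (Fin m)).filter
                  (fun z => FreeGroup.lift ρh w z ≠ FreeGroup.lift φ w z)).card
                = Dcard (FreeGroup.lift ρh w) (FreeGroup.lift φ w) := rfl
              _ ≤ wlen w * b := Dcard_lift_le _ _ b hbb w
              _ ≤ Lt * b := Nat.mul_le_mul_right b (hLt w hw)
        _ = W.card * (Lt * b) := by rw [Finset.sum_const, smul_eq_mul]
    calc (Bad.card : ℝ) ≤ (W.card : ℝ) * (Lt * b) := by exact_mod_cast h1
      _ = (W.card : ℝ) * Lt * b := by ring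
      _ ≤ (W.card : ℝ) * Lt * (m * D / smin) := by
          apply mul_le_mul_of_nonneg_left hbβ (by positivity)
  -- good points
  have hgood : ∀ x : Fin n, Fin.castLE h x ∉ Bad →
      |f (stabFun ρ x) - f (stabFun φ (Fin.castLE h x))| ≤ ε := by
    intro x hx
    apply hW
    intro w hw
    have hxw : FreeGroup.lift ρh w (Fin.castLE h x) = FreeGroup.lift φ w (Fin.castLE h x) := by
      by_contra hcon
      apply hx
      rw [hBadDef, Finset.mem_biUnion]
      exact ⟨w, hw, by simp [hcon]⟩
    have hlift : FreeGroup.lift ρh w (Fin.castLE h x)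
        = Fin.castLE h (FreeGroup.lift ρ w x) := by
      rw [hρh, lift_viaEmbedding]
      exact Equiv.Perm.viaEmbedding_apply _ _ x
    simp only [stabFun]
    apply decide_eq_decide.mpr
    constructor
    · intro hfix
      rw [← hxw, hlift, hfix]
    · intro hfix
      apply hinj
      rw [← hlift, hxw, hfix]
  -- sums
  set Sn : ℝ := ∑ x : Fin n, f (stabFun ρ x) with hSn
  set Sm : ℝ := ∑ x : Fin m, f (stabFun φ x) with hSm
  set Sn' : ℝ := ∑ x : Fin n, f (stabFun φ (Fin.castLE h x)) with hSn'
  have habsSn : |Sn| ≤ n * C := by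
    calc |Sn| ≤ ∑ x : Fin n, |f (stabFun ρ x)| := Finset.abs_sum_le_sum_abs _ _
      _ ≤ ∑ x : Fin n, C := Finset.sum_le_sum (fun x _ => hC _)
      _ = n * C := by rw [Finset.sum_const]; simp
  have hSnSn' : |Sn - Sn'| ≤ ε * n + 2 * C * Bad.card := by
    have hptwise : ∀ x : Fin n, |f (stabFun ρ x) - f (stabFun φ (Fin.castLE h x))|
        ≤ if Fin.castLE h x ∈ Bad then 2*C else ε := by
      intro x
      by_cases hx : Fin.castLE h x ∈ Bad
      · simp only [hx, if_true]
        calc |f (stabFun ρ x) - f (stabFun φ (Fin.castLE h x))|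
            ≤ |f (stabFun ρ x)| + |f (stabFun φ (Fin.castLE h x))| := abs_sub _ _
          _ ≤ C + C := add_le_add (hC _) (hC _)
          _ = 2 * C := by ring
      · simp only [hx, if_false]
        exact hgood x hx
    have hfiltercard : ((Finset.univ : Finset (Fin n)).filter
        (fun x => Fin.castLE h x ∈ Bad)).card ≤ Bad.card := by
      apply Finset.card_le_card_of_injOn (Fin.castLE h)
      · intro x hx
        simp only [Finset.coe_filter, Finset.mem_filter, Set.mem_setOf_eq, Finset.mem_coe] at hx
        exact hx.2
      · intro a _ b _ hab
        exact hinj hab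
    calc |Sn - Sn'| = |∑ x : Fin n, (f (stabFun ρ x) - f (stabFun φ (Fin.castLE h x)))| := by
          rw [hSn, hSn', Finset.sum_sub_distrib]
      _ ≤ ∑ x : Fin n, |f (stabFun ρ x) - f (stabFun φ (Fin.castLE h x))| :=
          Finset.abs_sum_le_sum_abs _ _
      _ ≤ ∑ x : Fin n, (if Fin.castLE h x ∈ Bad then 2*C else ε) :=
          Finset.sum_le_sum (fun x _ => hptwise x)
      _ = ((Finset.univ : Finset (Fin n)).filter (fun x => Fin.castLE h x ∈ Bad)).card * (2*C)
          + ((Finset.univ : Finset (Fin n)).filter (fun x => ¬ Fin.castLE h x ∈ Bad)).card * ε := by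
          rw [Finset.sum_ite]
          simp [mul_comm]
      _ ≤ Bad.card * (2*C) + n * ε := by
          apply add_le_add
          · apply mul_le_mul_of_nonneg_right _ (by positivity)
            exact_mod_cast hfiltercard
          · apply mul_le_mul_of_nonneg_right _ hε
            have : ((Finset.univ : Finset (Fin n)).filter
                (fun x => ¬ Fin.castLE h x ∈ Bad)).card ≤ n := by
              exact le_trans (Finset.card_filter_le _ _) (by simp)
            exact_mod_cast this
      _ = ε * n + 2 * C * Bad.card := by ring
  have hSn'Sm : |Sm - Sn'| ≤ ((m : ℝ) - n) * C := by
    set E : Finset (Fin m) := (Finset.univ : Finset (Fin n)).image (Fin.castLE h) with hE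
    have hcardE : E.card = n := by
      rw [hE, Finset.card_image_of_injective _ hinj]; simp
    have hSn'E : Sn' = ∑ z ∈ E, f (stabFun φ z) := by
      rw [hSn', hE, Finset.sum_image (fun a _ b _ hab => hinj hab)]
    have hsplit : Sm = (∑ z ∈ E, f (stabFun φ z)) + ∑ z ∈ Eᶜ, f (stabFun φ z) := by
      rw [hSm, ← Finset.sum_add_sum_compl E]
    have : Sm - Sn' = ∑ z ∈ Eᶜ, f (stabFun φ z) := by rw [hsplit, hSn'E]; ring
    rw [this]
    calc |∑ z ∈ Eᶜ, f (stabFun φ z)| ≤ ∑ z ∈ Eᶜ, |f (stabFun φ z)| :=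
          Finset.abs_sum_le_sum_abs _ _
      _ ≤ ∑ z ∈ Eᶜ, C := Finset.sum_le_sum (fun z _ => hC _)
      _ = Eᶜ.card * C := by rw [Finset.sum_const]; simp
      _ = ((m : ℝ) - n) * C := by
          rw [Finset.card_compl, hcardE]
          congr 1
          rw [Fintype.card_fin]
          rw [Nat.cast_sub h]
  -- final assembly
  have hfin : |Sn / n - Sm / m| ≤
      ((m:ℝ) - n)/m * C + (ε * n + 2*C*Bad.card)/m + ((m:ℝ) - n)/m * C := by
    have e1 : Sn / n - Sm / m = (1/n - 1/m) * Sn + (1/m) * (Sn - Sn') + (1/m) * (Sn' - Sm) := by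
      field_simp
      ring
    rw [e1]
    have t1 : |(1/(n:ℝ) - 1/m) * Sn| ≤ ((m:ℝ) - n)/m * C := by
      rw [abs_mul]
      have h1 : |1/(n:ℝ) - 1/m| = 1/(n:ℝ) - 1/m := by
        rw [abs_of_nonneg]
        have : (n:ℝ) ≤ m := by exact_mod_cast h
        rw [sub_nonneg]
        apply one_div_le_one_div_of_le hnR this
      rw [h1]
      calc (1/(n:ℝ) - 1/m) * |Sn| ≤ (1/(n:ℝ) - 1/m) * (n * C) := by
            apply mul_le_mul_of_nonneg_left habsSn
            have : (n:ℝ) ≤ m := by exact_mod_cast h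
            rw [sub_nonneg]
            apply one_div_le_one_div_of_le hnR this
        _ = ((m:ℝ) - n)/m * C := by field_simp
    have t2 : |(1/(m:ℝ)) * (Sn - Sn')| ≤ (ε * n + 2*C*Bad.card)/m := by
      rw [abs_mul, abs_of_nonneg (by positivity : (0:ℝ) ≤ 1/(m:ℝ))]
      calc 1/(m:ℝ) * |Sn - Sn'| ≤ 1/(m:ℝ) * (ε * n + 2*C*Bad.card) :=
            mul_le_mul_of_nonneg_left hSnSn' (by positivity)
        _ = (ε * n + 2*C*Bad.card)/m := by ring
    have t3 : |(1/(m:ℝ)) * (Sn' - Sm)| ≤ ((m:ℝ) - n)/m * C := by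
      rw [abs_mul, abs_of_nonneg (by positivity : (0:ℝ) ≤ 1/(m:ℝ))]
      rw [abs_sub_comm]
      calc (1/(m:ℝ)) * |Sm - Sn'| ≤ (1/(m:ℝ)) * (((m:ℝ) - n) * C) :=
            mul_le_mul_of_nonneg_left hSn'Sm (by positivity)
        _ = ((m:ℝ) - n)/m * C := by ring
    calc |(1/(n:ℝ) - 1/m) * Sn + (1/m) * (Sn - Sn') + (1/m) * (Sn' - Sm)|
        ≤ |(1/(n:ℝ) - 1/m) * Sn + (1/m) * (Sn - Sn')| + |(1/(m:ℝ)) * (Sn' - Sm)| :=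
          abs_add_le _ _
      _ ≤ |(1/(n:ℝ) - 1/m) * Sn| + |(1/(m:ℝ)) * (Sn - Sn')| + |(1/(m:ℝ)) * (Sn' - Sm)| := by
          have := abs_add_le ((1/(n:ℝ) - 1/m) * Sn) ((1/m) * (Sn - Sn'))
          linarith
      _ ≤ ((m:ℝ) - n)/m * C + (ε * n + 2*C*Bad.card)/m + ((m:ℝ) - n)/m * C := by
          linarith
  -- plug in the bounds
  have hdm : ∀ a b : ℝ, a ≤ b → a / m ≤ b / m := by
    intro a b hab
    gcongr
  have hq1 : ((m:ℝ) - n)/m * C ≤ C * D / smin := by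
    have h2 : ((m:ℝ) * D / smin)/m = D / smin := by
      field_simp
    have h1 : ((m:ℝ) - n)/m ≤ D/smin := h2 ▸ hdm _ _ hmn
    calc ((m:ℝ) - n)/m * C ≤ (D/smin) * C := mul_le_mul_of_nonneg_right h1 hC0
      _ = C * D / smin := by ring
  have hq2a : ε * n / m ≤ ε := by
    have h1 : ε * n ≤ ε * m := mul_le_mul_of_nonneg_left (by exact_mod_cast h) hε
    calc ε * n / m ≤ ε * m / m := hdm _ _ h1
      _ = ε := by field_simp
  have hq2b : 2*C*(Bad.card:ℝ)/m ≤ 2*C*W.card*Lt*D/smin := by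
    have h1 : 2*C*(Bad.card:ℝ) ≤ 2*C*((W.card:ℝ)*Lt*(m*D/smin)) :=
      mul_le_mul_of_nonneg_left hBadCard (by positivity)
    calc 2*C*(Bad.card:ℝ)/m ≤ 2*C*((W.card:ℝ)*Lt*(m*D/smin))/m := hdm _ _ h1
      _ = 2*C*W.card*Lt*D/smin := by
          field_simp
  calc |Sn / n - Sm / m|
      ≤ ((m:ℝ) - n)/m * C + (ε * n + 2*C*Bad.card)/m + ((m:ℝ) - n)/m * C := hfin
    _ = 2*(((m:ℝ) - n)/m*C) + ε*n/m + 2*C*(Bad.card:ℝ)/m := by ring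
    _ ≤ 2*(C*D/smin) + ε + 2*C*W.card*Lt*D/smin := by linarith
    _ = ε + 2 * C * (1 + W.card * Lt) * D / smin := by ring

end Aux

section MainAux
open MeasureTheory
open scoped ENNReal
variable {S : Type} [Fintype S]

omit [Fintype S] in
lemma freeGroup_eq_one_of_isEmpty [IsEmpty S] (w : FreeGroup S) : w = 1 := by
  classical
  have h : FreeGroup.toWord w = [] := by
    cases hw : FreeGroup.toWord w with
    | nil => rfl
    | cons p L => exact isEmptyElim p.1
  have h2 := FreeGroup.mk_toWord (x := w)
  rw [h] at h2
  rw [← h2]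
  rfl

omit [Fintype S] in
lemma PhiIRS_isEmpty [IsEmpty S] {X : Type} [Fintype X] [DecidableEq X] [Nonempty X]
    (σ : S → Equiv.Perm X) :
    PhiIRS σ = Measure.dirac (fun _ : FreeGroup S => true) := by
  have hstab : ∀ x : X, (fun w : FreeGroup S => decide (FreeGroup.lift σ w x = x))
      = fun _ => true := by
    intro x; funext w
    rw [freeGroup_eq_one_of_isEmpty w]
    simp
  rw [PhiIRS]
  simp only [hstab]
  rw [Finset.sum_const, Finset.card_univ]
  rw [← Nat.cast_smul_eq_nsmul ℝ≥0∞, smul_smul, ENNReal.inv_mul_cancel, one_smul]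
  · exact_mod_cast Nat.cast_ne_zero.mpr Fintype.card_ne_zero
  · exact ENNReal.natCast_ne_top _

lemma pos_of_PhiIRS_prob {n : ℕ} (ρ : S → Equiv.Perm (Fin n))
    (μ : Measure (FreeGroup S → Bool)) [IsProbabilityMeasure μ] (hμ : PhiIRS ρ = μ) :
    0 < n := by
  rcases Nat.eq_zero_or_pos n with h0 | h
  · exfalso
    subst h0
    have hz : PhiIRS ρ = 0 := by
      rw [PhiIRS]
      simp
    rw [hz] at hμ
    have h1 : μ Set.univ = 1 := measure_univ
    rw [← hμ] at h1
    simp at h1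
  · exact h

lemma term_nonneg (sig : S → ℝ) (hsig : ∀ s, 0 < sig s) {n m : ℕ} (hle : n ≤ m)
    (ρ : S → Equiv.Perm (Fin n)) (φ : S → Equiv.Perm (Fin m)) (s : S) :
    0 ≤ sig s * (1 - (Nat.card {x : Fin n //
        Fin.castLE hle (ρ s x) = (φ s) (Fin.castLE hle x)} : ℝ) / m) := by
  apply mul_nonneg (le_of_lt (hsig s))
  have hcn : Nat.card {x : Fin n //
      Fin.castLE hle (ρ s x) = (φ s) (Fin.castLE hle x)} ≤ m := by
    rw [Nat.card_eq_fintype_card]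
    exact le_trans (Fintype.card_subtype_le _) (by simp [hle])
  rcases Nat.eq_zero_or_pos m with hm | hm
  · subst hm
    simp
  · have hmR : (0:ℝ) < m := by exact_mod_cast hm
    have : (Nat.card {x : Fin n //
        Fin.castLE hle (ρ s x) = (φ s) (Fin.castLE hle x)} : ℝ) / m ≤ 1 := by
      rw [div_le_one hmR]
      exact_mod_cast hcn
    linarith

lemma editDistFin_nonneg (sig : S → ℝ) (hsig : ∀ s, 0 < sig s) {n m : ℕ} (hle : n ≤ m)
    (ρ : S → Equiv.Perm (Fin n)) (φ : S → Equiv.Perm (Fin m)) :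
    0 ≤ editDistFin sig hle ρ φ := by
  apply Real.iInf_nonneg
  intro θ
  apply Finset.sum_nonneg
  intro s _
  exact term_nonneg sig hsig hle ρ (fun t => θ * φ t * θ⁻¹) s

end MainAux

set_option maxHeartbeats 2000000 in
/-- If `π_k, π'_k` are finitely described IRSs of `F(S)`, `π_k` converges weak* to an
invariant random subgroup `πinf`, and the `sig`-weighted edit distance between `π_k` and
`π'_k` tends to `0`, then `π'_k` also converges weak* to `πinf`. -/
theorem weakStar_limit_of_editDist_tendsto_zero
    (S : Type) [Fintype S] (sig : S → ℝ) (hsig : ∀ s, 0 < sig s)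
    (π π' : ℕ → Measure (FreeGroup S → Bool))
    (πinf : Measure (FreeGroup S → Bool)) [IsProbabilityMeasure πinf]
    (hfd : ∀ k, ∃ n : ℕ, 0 < n ∧ ∃ ρ : S → Equiv.Perm (Fin n), PhiIRS ρ = π k)
    (hfd' : ∀ k, ∃ n : ℕ, 0 < n ∧ ∃ ρ : S → Equiv.Perm (Fin n), PhiIRS ρ = π' k)
    (hsub : πinf {A : FreeGroup S → Bool |
        ∃ H : Subgroup (FreeGroup S), ∀ w : FreeGroup S, A w = true ↔ w ∈ H} = 1)
    (hinv : ∀ w : FreeGroup S,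
        πinf.map (fun (A : FreeGroup S → Bool) (u : FreeGroup S) => A (w⁻¹ * u * w)) = πinf)
    (hconv : ∀ f : C(FreeGroup S → Bool, ℝ),
        Filter.Tendsto (fun k => ∫ A, f A ∂(π k)) Filter.atTop (nhds (∫ A, f A ∂πinf)))
    (hedit : Filter.Tendsto (fun k => editDistIRS sig (π k) (π' k)) Filter.atTop (nhds 0)) :
    ∀ f : C(FreeGroup S → Bool, ℝ),
      Filter.Tendsto (fun k => ∫ A, f A ∂(π' k)) Filter.atTop (nhds (∫ A, f A ∂πinf)) := by
  intro f
  rcases isEmpty_or_nonempty S with hS | hS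
  · -- empty alphabet: all finitely described IRSs coincide
    have hkey : ∀ k, π' k = π k := by
      intro k
      obtain ⟨n, hn, ρ, hρ⟩ := hfd k
      obtain ⟨n', hn', ρ', hρ'⟩ := hfd' k
      haveI : Nonempty (Fin n) := ⟨⟨0, hn⟩⟩
      haveI : Nonempty (Fin n') := ⟨⟨0, hn'⟩⟩
      rw [← hρ, ← hρ', PhiIRS_isEmpty, PhiIRS_isEmpty]
    have := hconv f
    simp only [hkey]
    exact this
  · -- main case
    have hdiff : Filter.Tendsto (fun k => (∫ A, f A ∂(π' k)) - ∫ A, f A ∂(π k))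
        Filter.atTop (nhds 0) := by
      rw [NormedAddCommGroup.tendsto_nhds_zero]
      intro ε hε
      classical
      set C : ℝ := ‖BoundedContinuousFunction.mkOfCompact f‖ with hCdef
      have hC0 : 0 ≤ C := norm_nonneg _
      have hC : ∀ A, |f A| ≤ C := by
        intro A
        have := BoundedContinuousFunction.norm_coe_le_norm
          (BoundedContinuousFunction.mkOfCompact f) A
        simpa [Real.norm_eq_abs, hCdef] using this
      obtain ⟨W, hW⟩ := exists_window f (show (0:ℝ) < ε/3 by linarith)
      set Lt : ℕ := W.sup wlen with hLtdef
      have hLt : ∀ w ∈ W, wlen w ≤ Lt := fun w hw => Finset.le_sup hw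
      have hSne : (Finset.univ : Finset S).Nonempty := Finset.univ_nonempty
      set smin : ℝ := Finset.univ.inf' hSne sig with hsmindef
      have hsmin' : ∀ s, smin ≤ sig s := fun s => Finset.inf'_le _ (Finset.mem_univ s)
      have hsmin : 0 < smin := by
        obtain ⟨s₀, _, hs₀⟩ := Finset.exists_mem_eq_inf' hSne sig
        rw [hsmindef, hs₀]
        exact hsig s₀
      set K : ℝ := 2 * C * (1 + W.card * Lt) / smin with hKdef
      have hK0 : 0 ≤ K := by
        rw [hKdef]
        apply div_nonneg _ (le_of_lt hsmin)
        apply mul_nonneg (by linarith) (by positivity)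
      set δ : ℝ := (ε/3) / (K + 1) with hδdef
      have hδ : 0 < δ := by
        rw [hδdef]
        apply div_pos (by linarith) (by linarith)
      have hKδ : K * δ ≤ ε/3 := by
        rw [hδdef]
        calc K * ((ε/3)/(K+1)) = (ε/3) * (K/(K+1)) := by ring
          _ ≤ (ε/3) * 1 := by
              apply mul_le_mul_of_nonneg_left _ (by linarith)
              exact div_le_one_of_le₀ (by linarith) (by linarith)
          _ = ε/3 := mul_one _
      have hev : ∀ᶠ k in Filter.atTop, editDistIRS sig (π k) (π' k) < δ :=
        hedit.eventually_lt_const hδ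
      filter_upwards [hev] with k hk
      -- probability measures
      obtain ⟨n₀, hn₀, ρ₀, hρ₀⟩ := hfd k
      obtain ⟨n₁, hn₁, ρ₁, hρ₁⟩ := hfd' k
      haveI : Nonempty (Fin n₀) := ⟨⟨0, hn₀⟩⟩
      haveI : Nonempty (Fin n₁) := ⟨⟨0, hn₁⟩⟩
      haveI hPk : IsProbabilityMeasure (π k) := hρ₀ ▸ isProbabilityMeasure_PhiIRS ρ₀
      haveI hP'k : IsProbabilityMeasure (π' k) := hρ₁ ▸ isProbabilityMeasure_PhiIRS ρ₁
      -- the representation set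
      set 𝒮 : Set ℝ := {d : ℝ |
        ∃ (n m : ℕ) (h : n ≤ m) (ρ : S → Equiv.Perm (Fin n)) (φ : S → Equiv.Perm (Fin m)),
          ((PhiIRS ρ = π k ∧ PhiIRS φ = π' k) ∨ (PhiIRS ρ = π' k ∧ PhiIRS φ = π k)) ∧
          d = editDistFin sig h ρ φ} with h𝒮
      have h𝒮ne : 𝒮.Nonempty := by
        rcases le_total n₀ n₁ with h01 | h10
        · exact ⟨editDistFin sig h01 ρ₀ ρ₁, n₀, n₁, h01, ρ₀, ρ₁, Or.inl ⟨hρ₀, hρ₁⟩, rfl⟩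
        · exact ⟨editDistFin sig h10 ρ₁ ρ₀, n₁, n₀, h10, ρ₁, ρ₀, Or.inr ⟨hρ₁, hρ₀⟩, rfl⟩
      have h𝒮bdd : BddBelow 𝒮 := by
        refine ⟨0, fun d hd => ?_⟩
        obtain ⟨n, m, hle, ρ, φ, _, hdeq⟩ := hd
        rw [hdeq]
        exact editDistFin_nonneg sig hsig hle ρ φ
      have hsInf : sInf 𝒮 < δ := by
        have : editDistIRS sig (π k) (π' k) = sInf 𝒮 := rfl
        rw [← this]
        exact hk
      obtain ⟨d, hd𝒮, hdδ⟩ := (csInf_lt_iff h𝒮bdd h𝒮ne).mp hsInf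
      obtain ⟨n, m, hle, ρ, φ, hor, hdeq⟩ := hd𝒮
      -- positivity of n
      have hn : 0 < n := by
        rcases hor with ⟨hρeq, _⟩ | ⟨hρeq, _⟩
        · exact pos_of_PhiIRS_prob ρ (π k) hρeq
        · exact pos_of_PhiIRS_prob ρ (π' k) hρeq
      -- pick a good conjugator
      rw [hdeq] at hdδ
      obtain ⟨θ, hθ⟩ := exists_lt_of_ciInf_lt hdδ
      set D : ℝ := ∑ s : S, sig s *
        (1 - (Nat.card {x : Fin n //
            Fin.castLE hle (ρ s x) = (θ * φ s * θ⁻¹) (Fin.castLE hle x)} : ℝ) / m) with hDdef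
      have hD0 : 0 ≤ D := by
        rw [hDdef]
        apply Finset.sum_nonneg
        intro s _
        exact term_nonneg sig hsig hle ρ (fun t => θ * φ t * θ⁻¹) s
      have hDs : ∀ s : S, sig s *
          (1 - (Nat.card {x : Fin n //
              Fin.castLE hle (ρ s x) =
                ((fun t => θ * φ t * θ⁻¹) s) (Fin.castLE hle x)} : ℝ) / m) ≤ D := by
        intro s
        rw [hDdef]
        exact Finset.single_le_sum
          (fun t _ => term_nonneg sig hsig hle ρ (fun t => θ * φ t * θ⁻¹) t)
          (Finset.mem_univ s)
      have hcore := core_estimate sig hsig smin hsmin hsmin' hle hn ρ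
        (fun t => θ * φ t * θ⁻¹) f C hC (ε/3) (by linarith) W hW Lt hLt D hD0 hDs
      -- identify the integrals
      have hIρ : ∫ A, f A ∂(PhiIRS ρ) = (∑ x : Fin n, f (stabFun ρ x)) / n := by
        rw [integral_PhiIRS]
        simp
      have hIφ : ∫ A, f A ∂(PhiIRS φ)
          = (∑ x : Fin m, f (stabFun (fun t => θ * φ t * θ⁻¹) x)) / m := by
        rw [← PhiIRS_conj φ θ, integral_PhiIRS]
        simp
      have hbound : |(∑ x : Fin n, f (stabFun ρ x)) / n
          - (∑ x : Fin m, f (stabFun (fun t => θ * φ t * θ⁻¹) x)) / m| < ε := by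
        calc |(∑ x : Fin n, f (stabFun ρ x)) / n
            - (∑ x : Fin m, f (stabFun (fun t => θ * φ t * θ⁻¹) x)) / m|
            ≤ ε/3 + 2 * C * (1 + W.card * Lt) * D / smin := hcore
          _ = ε/3 + K * D := by rw [hKdef]; ring
          _ ≤ ε/3 + K * δ := by
              have := mul_le_mul_of_nonneg_left (le_of_lt hθ) hK0
              linarith
          _ ≤ ε/3 + ε/3 := by linarith
          _ < ε := by linarith
      rcases hor with ⟨hρeq, hφeq⟩ | ⟨hρeq, hφeq⟩
      · rw [Real.norm_eq_abs, ← hρeq, ← hφeq, hIρ, hIφ, abs_sub_comm]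
        exact hbound
      · rw [Real.norm_eq_abs, ← hρeq, ← hφeq, hIρ, hIφ]
        exact hbound
    have hsum := hdiff.add (hconv f)
    have heq : (fun k => ((∫ A, f A ∂(π' k)) - ∫ A, f A ∂(π k)) + ∫ A, f A ∂(π k))
        = fun k => ∫ A, f A ∂(π' k) := by
      funext k
      ring
    rw [heq] at hsum
    rw [zero_add] at hsum
    exact hsum
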